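/- Let a > 0, ε ∈ (0, 1/2), and d ≥ 0 a natural number. If there exists a real polynomial p of degree at most d with sup_{x ∈ [-1,1]} |p(x) - e^{a(x-1)}| ≤ ε, then setting n = d+1 one has (a/2)^n / n! ≤ 2εe^a/π, and consequently (e·a/(2n))^n ≤ e·√n · 2εe^a/π. -/

import Mathlib

open MeasureTheory intervalIntegral Real Finset Filter Topology
set_option maxHeartbeats 1000000

noncomputable def II (k m : ℕ) : ℝ := ∫ θ in (0:ℝ)..π, (Real.cos θ)^k * Real.cos (m * θ)

lemma cont_II (k m : ℕ) : Continuous fun θ : ℝ => (Real.cos θ)^k * Real.cos (m * θ) := by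
  fun_prop

lemma II_zero_zero : II 0 0 = π := by
  simp [II]

lemma II_zero (m : ℕ) (hm : 1 ≤ m) : II 0 m = 0 := by
  have hm' : (m : ℝ) ≠ 0 := by positivity
  simp only [II, pow_zero, one_mul]
  rw [intervalIntegral.integral_comp_mul_left (fun x => Real.cos x) hm']
  simp [integral_cos, Real.sin_nat_mul_pi]

lemma II_succ_succ (k m : ℕ) : II (k+1) (m+1) = (II k (m+2) + II k m) / 2 := by
  have key : ∀ θ : ℝ, (Real.cos θ)^(k+1) * Real.cos ((m+1 : ℕ) * θ)
      = ((Real.cos θ)^k * Real.cos ((m+2 : ℕ) * θ) + (Real.cos θ)^k * Real.cos ((m : ℕ) * θ)) / 2 := by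
    intro θ
    have h := Real.cos_add ((m+1 : ℕ) * θ) θ
    have h2 := Real.cos_sub ((m+1 : ℕ) * θ) θ
    have e1 : ((m+1 : ℕ) : ℝ) * θ + θ = ((m+2 : ℕ) : ℝ) * θ := by push_cast; ring
    have e2 : ((m+1 : ℕ) : ℝ) * θ - θ = ((m : ℕ) : ℝ) * θ := by push_cast; ring
    rw [e1] at h; rw [e2] at h2
    have : Real.cos ((m+2:ℕ) * θ) + Real.cos ((m:ℕ) * θ)
        = 2 * (Real.cos ((m+1:ℕ)*θ) * Real.cos θ) := by rw [h, h2]; ring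
    have hh : Real.cos ((m+1:ℕ)*θ) * Real.cos θ
        = (Real.cos ((m+2:ℕ) * θ) + Real.cos ((m:ℕ) * θ)) / 2 := by linarith
    calc (Real.cos θ)^(k+1) * Real.cos ((m+1 : ℕ) * θ)
        = (Real.cos θ)^k * (Real.cos ((m+1:ℕ)*θ) * Real.cos θ) := by ring
      _ = _ := by rw [hh]; ring
  simp only [II]
  rw [intervalIntegral.integral_congr (g := fun θ => ((Real.cos θ)^k * Real.cos ((m+2 : ℕ) * θ) + (Real.cos θ)^k * Real.cos ((m : ℕ) * θ)) / 2) (fun θ _ => key θ)]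
  rw [intervalIntegral.integral_div, intervalIntegral.integral_add
    ((cont_II k (m+2)).intervalIntegrable _ _) ((cont_II k m).intervalIntegrable _ _)]

lemma II_succ_zero (k : ℕ) : II (k+1) 0 = II k 1 := by
  simp only [II]
  apply intervalIntegral.integral_congr
  intro θ _
  simp [pow_succ]

lemma II_props (k : ℕ) : (∀ m, 0 ≤ II k m) ∧ (∀ m, k < m → II k m = 0) ∧ II k k = π / 2^k := by
  induction k with
  | zero =>
    refine ⟨fun m => ?_, fun m hm => II_zero m hm, by simp [II_zero_zero]⟩
    rcases Nat.eq_zero_or_pos m with h | h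
    · rw [h, II_zero_zero]; exact Real.pi_pos.le
    · rw [II_zero m h]
  | succ k ih =>
    obtain ⟨hnn, hz, hv⟩ := ih
    have hrec : ∀ m, II (k+1) (m+1) = (II k (m+2) + II k m) / 2 := II_succ_succ k
    refine ⟨fun m => ?_, fun m hm => ?_, ?_⟩
    · cases m with
      | zero => rw [II_succ_zero]; exact hnn 1
      | succ m => rw [hrec m]; have := hnn (m+2); have := hnn m; linarith
    · cases m with
      | zero => omega
      | succ m =>
        rw [hrec m, hz (m+2) (by omega), hz m (by omega)]; norm_num
    · rw [hrec k, hz (k+2) (by omega), hv]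
      rw [pow_succ]; field_simp; ring
lemma poly_orth (p : Polynomial ℝ) (d : ℕ) (hdeg : p.natDegree ≤ d) :
    ∫ θ in (0:ℝ)..π, p.eval (Real.cos θ) * Real.cos ((d+1 : ℕ) * θ) = 0 := by
  have hlt : p.natDegree < d + 1 := Nat.lt_succ_of_le hdeg
  have key : ∀ θ ∈ Set.uIcc (0:ℝ) π, p.eval (Real.cos θ) * Real.cos ((d+1:ℕ) * θ)
      = ∑ i ∈ range (d+1), p.coeff i * ((Real.cos θ)^i * Real.cos ((d+1:ℕ)*θ)) := by
    intro θ _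
    rw [Polynomial.eval_eq_sum_range' hlt, Finset.sum_mul]
    exact Finset.sum_congr rfl fun i _ => by ring
  rw [intervalIntegral.integral_congr key, intervalIntegral.integral_finset_sum
    (f := fun i θ => p.coeff i * ((Real.cos θ)^i * Real.cos ((d+1:ℕ)*θ))) (fun i _ => ((continuous_const.mul (cont_II i (d+1)))).intervalIntegrable _ _)]
  refine Finset.sum_eq_zero fun i hi => ?_
  rw [intervalIntegral.integral_const_mul]
  have : II i (d+1) = 0 := (II_props i).2.1 (d+1) (by simp at hi; omega)
  rw [II] at this; rw [this, mul_zero]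

lemma abs_cos_int : ∫ θ in (0:ℝ)..π, |Real.cos θ| = 2 := by
  have h1 : (0:ℝ) ≤ π/2 := by positivity
  have h2 : π/2 ≤ π := by linarith [Real.pi_pos]
  have ii : ∀ a b : ℝ, IntervalIntegrable (fun θ => |Real.cos θ|) volume a b :=
    fun a b => (continuous_abs.comp Real.continuous_cos).intervalIntegrable _ _
  rw [← intervalIntegral.integral_add_adjacent_intervals (ii 0 (π/2)) (ii (π/2) π)]
  have e1 : ∫ θ in (0:ℝ)..(π/2), |Real.cos θ| = 1 := by
    rw [intervalIntegral.integral_congr (g := fun θ => Real.cos θ) ?_]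
    · rw [integral_cos]; simp
    · intro θ hθ
      rw [Set.uIcc_of_le h1] at hθ
      exact abs_of_nonneg (Real.cos_nonneg_of_mem_Icc ⟨by linarith [hθ.1, Real.pi_pos], hθ.2⟩)
  have e2 : ∫ θ in (π/2:ℝ)..π, |Real.cos θ| = 1 := by
    rw [intervalIntegral.integral_congr (g := fun θ => -Real.cos θ) ?_]
    · rw [intervalIntegral.integral_neg, integral_cos]; simp
    · intro θ hθ
      rw [Set.uIcc_of_le h2] at hθ
      refine abs_of_nonpos (Real.cos_nonpos_of_pi_div_two_le_of_le hθ.1 (by linarith [hθ.2, Real.pi_pos]))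
  rw [e1, e2]; norm_num

lemma abs_cos_nat (n : ℕ) (hn : 1 ≤ n) : ∫ θ in (0:ℝ)..π, |Real.cos ((n:ℝ) * θ)| = 2 := by
  have hn' : (n:ℝ) ≠ 0 := by positivity
  rw [intervalIntegral.integral_comp_mul_left (fun x => |Real.cos x|) hn']
  have hper : Function.Periodic (fun x : ℝ => |Real.cos x|) π := fun x => by
    simp [Real.cos_add_pi]
  have hz := hper.intervalIntegral_add_zsmul_eq (n : ℤ) 0
    (fun t₁ t₂ => (continuous_abs.comp Real.continuous_cos).intervalIntegrable _ _)
  simp only [zero_add, zsmul_eq_mul, Int.cast_natCast] at hz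
  rw [mul_zero, hz, abs_cos_int, smul_eq_mul]
  field_simp

lemma hasSum_exp_real (x : ℝ) : HasSum (fun k : ℕ => x^k / (k.factorial : ℝ)) (Real.exp x) := by
  rw [Real.exp_eq_exp_ℝ]
  exact NormedSpace.expSeries_div_hasSum_exp x

lemma exp_tail (a x : ℝ) (hx : |x| ≤ a) (N : ℕ) :
    |Real.exp x - ∑ k ∈ range N, x^k / k.factorial| ≤
      Real.exp a - ∑ k ∈ range N, a^k / k.factorial := by
  have hxs := hasSum_exp_real x
  have has := hasSum_exp_real a
  have hsx : Summable fun k : ℕ => x^k / (k.factorial : ℝ) := hxs.summable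
  have hsa : Summable fun k : ℕ => a^k / (k.factorial : ℝ) := has.summable
  have ex : Real.exp x - ∑ k ∈ range N, x^k / k.factorial
      = ∑' k : ℕ, x^(k+N) / ((k+N).factorial : ℝ) := by
    rw [← hxs.tsum_eq, ← Summable.sum_add_tsum_nat_add N hsx]; ring
  have ea : Real.exp a - ∑ k ∈ range N, a^k / k.factorial
      = ∑' k : ℕ, a^(k+N) / ((k+N).factorial : ℝ) := by
    rw [← has.tsum_eq, ← Summable.sum_add_tsum_nat_add N hsa]; ring
  rw [ex, ea]
  have h2 : Summable fun k : ℕ => |x^(k+N)/((k+N).factorial:ℝ)| :=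
    ((summable_nat_add_iff N).2 hsx).abs
  have h1 : |∑' k : ℕ, x^(k+N) / ((k+N).factorial : ℝ)|
      ≤ ∑' k : ℕ, |x^(k+N) / ((k+N).factorial : ℝ)| := by
    simpa only [Real.norm_eq_abs] using norm_tsum_le_tsum_norm
      (f := fun k : ℕ => x^(k+N)/((k+N).factorial:ℝ)) (by simpa only [Real.norm_eq_abs] using h2)
  refine h1.trans (Summable.tsum_le_tsum (fun k => ?_) h2 ((summable_nat_add_iff N).2 hsa))
  rw [abs_div, abs_pow, Nat.abs_cast]
  have h0 : (0:ℝ) ≤ a := (abs_nonneg x).trans hx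
  gcongr

lemma J_lower (a : ℝ) (ha : 0 < a) (n : ℕ) :
    π * (a/2)^n / n.factorial ≤ ∫ θ in (0:ℝ)..π, Real.exp (a * Real.cos θ) * Real.cos ((n:ℕ)*θ) := by
  set J := ∫ θ in (0:ℝ)..π, Real.exp (a * Real.cos θ) * Real.cos ((n:ℕ)*θ) with hJ
  set δ : ℕ → ℝ := fun N => Real.exp a - ∑ k ∈ range N, a^k / k.factorial with hδ
  -- partial-sum integrals
  have hSint : ∀ N : ℕ, (∫ θ in (0:ℝ)..π,
      (∑ k ∈ range N, (a * Real.cos θ)^k / k.factorial) * Real.cos ((n:ℕ)*θ))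
      = ∑ k ∈ range N, a^k / k.factorial * II k n := by
    intro N
    have key : ∀ θ ∈ Set.uIcc (0:ℝ) π,
        (∑ k ∈ range N, (a * Real.cos θ)^k / k.factorial) * Real.cos ((n:ℕ)*θ)
        = ∑ k ∈ range N, a^k / k.factorial * ((Real.cos θ)^k * Real.cos ((n:ℕ)*θ)) := by
      intro θ _
      rw [Finset.sum_mul]
      exact Finset.sum_congr rfl fun k _ => by rw [mul_pow]; ring
    rw [intervalIntegral.integral_congr key, intervalIntegral.integral_finset_sum
      (f := fun k θ => a^k / (k.factorial:ℝ) * ((Real.cos θ)^k * Real.cos ((n:ℕ)*θ))) (fun k _ => (continuous_const.mul (cont_II k n)).intervalIntegrable _ _)]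
    exact Finset.sum_congr rfl fun k _ => by rw [intervalIntegral.integral_const_mul]; rfl
  -- lower bound for partial sums with N ≥ n+1
  have hlow : ∀ N : ℕ, n + 1 ≤ N →
      π * (a/2)^n / n.factorial ≤ ∑ k ∈ range N, a^k / k.factorial * II k n := by
    intro N hN
    have hmem : n ∈ range N := mem_range.2 (by omega)
    have hsingle : a^n / n.factorial * II n n ≤ ∑ k ∈ range N, a^k / k.factorial * II k n := by
      refine Finset.single_le_sum (f := fun k => a^k / (k.factorial:ℝ) * II k n) (fun k _ => ?_) hmem
      have h1 := (II_props k).1 n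
      positivity
    have : a^n / n.factorial * II n n = π * (a/2)^n / n.factorial := by
      rw [(II_props n).2.2, div_pow]
      field_simp
    linarith
  -- closeness of partial-sum integrals to J
  have hclose : ∀ N : ℕ, |J - ∑ k ∈ range N, a^k / k.factorial * II k n| ≤ π * δ N := by
    intro N
    rw [← hSint N]
    have hcont : Continuous fun θ : ℝ => (Real.exp (a * Real.cos θ)
        - ∑ k ∈ range N, (a * Real.cos θ)^k / k.factorial) * Real.cos ((n:ℕ)*θ) := by
      fun_prop
    have hdiff : J - (∫ θ in (0:ℝ)..π,
        (∑ k ∈ range N, (a * Real.cos θ)^k / k.factorial) * Real.cos ((n:ℕ)*θ))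
        = ∫ θ in (0:ℝ)..π, (Real.exp (a * Real.cos θ)
            - ∑ k ∈ range N, (a * Real.cos θ)^k / k.factorial) * Real.cos ((n:ℕ)*θ) := by
      rw [hJ, ← intervalIntegral.integral_sub
        ((by fun_prop : Continuous fun θ : ℝ => Real.exp (a * Real.cos θ) * Real.cos ((n:ℕ)*θ)).intervalIntegrable _ _)
        ((by fun_prop : Continuous fun θ : ℝ => (∑ k ∈ range N, (a * Real.cos θ)^k / k.factorial) * Real.cos ((n:ℕ)*θ)).intervalIntegrable _ _)]
      congr 1; ext θ; ring
    rw [hdiff]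
    have hbound : ∀ θ : ℝ, ‖(Real.exp (a * Real.cos θ)
        - ∑ k ∈ range N, (a * Real.cos θ)^k / k.factorial) * Real.cos ((n:ℕ)*θ)‖ ≤ δ N := by
      intro θ
      rw [Real.norm_eq_abs, abs_mul]
      have h1 : |a * Real.cos θ| ≤ a := by
        rw [abs_mul, abs_of_pos ha]
        nlinarith [Real.abs_cos_le_one θ, ha.le]
      have h2 := exp_tail a (a * Real.cos θ) h1 N
      have h3 : |Real.cos ((n:ℕ)*θ)| ≤ 1 := Real.abs_cos_le_one _
      have h4 : (0:ℝ) ≤ |Real.exp (a * Real.cos θ) - ∑ k ∈ range N, (a * Real.cos θ)^k / k.factorial| := abs_nonneg _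
      calc |Real.exp (a * Real.cos θ) - ∑ k ∈ range N, (a * Real.cos θ)^k / k.factorial| * |Real.cos ((n:ℕ)*θ)|
          ≤ |Real.exp (a * Real.cos θ) - ∑ k ∈ range N, (a * Real.cos θ)^k / k.factorial| * 1 := by gcongr
        _ ≤ δ N := by rw [mul_one]; exact h2
    have hni := intervalIntegral.norm_integral_le_of_norm_le_const (a := (0:ℝ)) (b := π) (C := δ N)
      (fun θ _ => hbound θ)
    rw [Real.norm_eq_abs] at hni
    calc |∫ θ in (0:ℝ)..π, (Real.exp (a * Real.cos θ)
            - ∑ k ∈ range N, (a * Real.cos θ)^k / k.factorial) * Real.cos ((n:ℕ)*θ)|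
        ≤ δ N * |π - 0| := hni
      _ = π * δ N := by rw [sub_zero, abs_of_pos Real.pi_pos]; ring
  have hδ0 : Tendsto δ atTop (𝓝 0) := by
    have h1 := (hasSum_exp_real a).tendsto_sum_nat
    have h2 : Tendsto (fun N => Real.exp a - ∑ k ∈ range N, a^k/(k.factorial:ℝ)) atTop
        (𝓝 (Real.exp a - Real.exp a)) := tendsto_const_nhds.sub h1
    simpa using h2
  have hc : Tendsto (fun N => π * (a/2)^n / n.factorial - π * δ N) atTop
      (𝓝 (π * (a/2)^n / n.factorial)) := by
    have h3 := hδ0.const_mul π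
    simpa using tendsto_const_nhds.sub h3
  refine le_of_tendsto hc ?_
  filter_upwards [eventually_ge_atTop (n+1)] with N hN
  have h1 := hlow N hN
  have h2 := (abs_le.1 (hclose N)).1
  linarith
lemma J_upper (a ε : ℝ) (hε : 0 < ε) (d : ℕ) (p : Polynomial ℝ) (hdeg : p.natDegree ≤ d)
    (happrox : ∀ x ∈ Set.Icc (-1:ℝ) 1, |p.eval x - Real.exp (a*(x-1))| ≤ ε) :
    ∫ θ in (0:ℝ)..π, Real.exp (a * (Real.cos θ - 1)) * Real.cos ((d+1:ℕ)*θ) ≤ 2*ε := by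
  have hcf : Continuous fun θ : ℝ => Real.exp (a * (Real.cos θ - 1)) * Real.cos ((d+1:ℕ)*θ) := by
    fun_prop
  have hcp : Continuous fun θ : ℝ => p.eval (Real.cos θ) := p.continuous.comp Real.continuous_cos
  have hcp2 : Continuous fun θ : ℝ => p.eval (Real.cos θ) * Real.cos ((d+1:ℕ)*θ) := by fun_prop
  have heq : (∫ θ in (0:ℝ)..π, Real.exp (a * (Real.cos θ - 1)) * Real.cos ((d+1:ℕ)*θ))
      = ∫ θ in (0:ℝ)..π, (Real.exp (a * (Real.cos θ - 1)) - p.eval (Real.cos θ)) * Real.cos ((d+1:ℕ)*θ) := by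
    have : (∫ θ in (0:ℝ)..π, (Real.exp (a * (Real.cos θ - 1)) - p.eval (Real.cos θ)) * Real.cos ((d+1:ℕ)*θ))
        = (∫ θ in (0:ℝ)..π, Real.exp (a * (Real.cos θ - 1)) * Real.cos ((d+1:ℕ)*θ))
          - ∫ θ in (0:ℝ)..π, p.eval (Real.cos θ) * Real.cos ((d+1:ℕ)*θ) := by
      rw [← intervalIntegral.integral_sub (hcf.intervalIntegrable _ _) (hcp2.intervalIntegrable _ _)]
      congr 1; ext θ; ring
    rw [this, poly_orth p d hdeg, sub_zero]
  rw [heq]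
  have habs : (∫ θ in (0:ℝ)..π, (Real.exp (a * (Real.cos θ - 1)) - p.eval (Real.cos θ)) * Real.cos ((d+1:ℕ)*θ))
      ≤ |∫ θ in (0:ℝ)..π, (Real.exp (a * (Real.cos θ - 1)) - p.eval (Real.cos θ)) * Real.cos ((d+1:ℕ)*θ)| :=
    le_abs_self _
  refine habs.trans ?_
  have h1 := intervalIntegral.abs_integral_le_integral_abs (f := fun θ =>
    (Real.exp (a * (Real.cos θ - 1)) - p.eval (Real.cos θ)) * Real.cos ((d+1:ℕ)*θ)) (μ := volume) Real.pi_pos.le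
  refine h1.trans ?_
  have h2 : (∫ θ in (0:ℝ)..π, |(Real.exp (a * (Real.cos θ - 1)) - p.eval (Real.cos θ)) * Real.cos ((d+1:ℕ)*θ)|)
      ≤ ∫ θ in (0:ℝ)..π, ε * |Real.cos ((d+1:ℕ)*θ)| := by
    refine intervalIntegral.integral_mono_on Real.pi_pos.le
      ((continuous_abs.comp (by fun_prop)).intervalIntegrable _ _)
      ((continuous_const.mul (continuous_abs.comp (by fun_prop))).intervalIntegrable _ _)
      (fun θ _ => ?_)
    rw [abs_mul]
    have hc1 : Real.cos θ ∈ Set.Icc (-1:ℝ) 1 := ⟨Real.neg_one_le_cos θ, Real.cos_le_one θ⟩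
    have h3 := happrox _ hc1
    rw [abs_sub_comm] at h3
    exact mul_le_mul_of_nonneg_right h3 (abs_nonneg _)
  refine h2.trans ?_
  rw [intervalIntegral.integral_const_mul]
  have h4 : ((d+1:ℕ):ℝ) = ((d:ℝ)+1) := by push_cast; ring
  rw [abs_cos_nat (d+1) (by omega)]
  ring_nf
  exact le_refl _

lemma factorial_stirling (n : ℕ) (hn : 1 ≤ n) :
    (n.factorial : ℝ) ≤ Real.exp 1 * Real.sqrt n * ((n:ℝ)/Real.exp 1)^n := by
  obtain ⟨m, rfl⟩ : ∃ m, n = m + 1 := ⟨n-1, by omega⟩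
  have h := Stirling.stirlingSeq'_antitone (Nat.zero_le m)
  simp only [Function.comp_apply, Nat.succ_eq_add_one, Nat.zero_add] at h
  rw [Stirling.stirlingSeq_one] at h
  have hpos : (0:ℝ) < Real.sqrt (2*(m+1:ℕ)) * (((m+1:ℕ):ℝ)/Real.exp 1)^(m+1) := by
    have : (0:ℝ) < ((m+1:ℕ):ℝ) := by positivity
    positivity
  have hdef : Stirling.stirlingSeq (m+1)
      = (m+1).factorial / (Real.sqrt (2*(m+1:ℕ)) * (((m+1:ℕ):ℝ)/Real.exp 1)^(m+1)) := by
    rw [Stirling.stirlingSeq]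
  rw [hdef, div_le_iff₀ hpos] at h
  refine h.trans (le_of_eq ?_)
  rw [Real.sqrt_mul (by norm_num : (0:ℝ) ≤ 2)]
  have h2 : (0:ℝ) < Real.sqrt 2 := by positivity
  push_cast
  field_simp

/-- Stirling/Lambert-W step: if a degree-`d` polynomial approximates `exp (a*(x-1))`
uniformly on `[-1,1]` to error `ε ∈ (0, 1/2)`, then with `n = d + 1` one has
`(a/2)^n / n! ≤ 2 ε e^a / π` and consequently `(e·a/(2n))^n ≤ e·√n · 2 ε e^a / π`. -/
theorem stmt4 (a ε : ℝ) (ha : 0 < a) (hε : ε ∈ Set.Ioo (0 : ℝ) (1 / 2)) (d : ℕ)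
    (p : Polynomial ℝ) (hdeg : p.natDegree ≤ d)
    (happrox : ∀ x ∈ Set.Icc (-1 : ℝ) 1, |p.eval x - Real.exp (a * (x - 1))| ≤ ε) :
    (a / 2) ^ (d + 1) / (((d : ℕ) + 1).factorial : ℝ) ≤ 2 * ε * Real.exp a / Real.pi ∧
      (Real.exp 1 * a / (2 * ((d : ℝ) + 1))) ^ (d + 1) ≤
        Real.exp 1 * Real.sqrt ((d : ℝ) + 1) * (2 * ε * Real.exp a / Real.pi) := by
  obtain ⟨hε0, hε2⟩ := hε
  -- relation between the two integrals
  have hJrel : (∫ θ in (0:ℝ)..π, Real.exp (a * (Real.cos θ - 1)) * Real.cos ((d+1:ℕ)*θ))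
      = Real.exp (-a) * ∫ θ in (0:ℝ)..π, Real.exp (a * Real.cos θ) * Real.cos ((d+1:ℕ)*θ) := by
    rw [← intervalIntegral.integral_const_mul]
    refine intervalIntegral.integral_congr fun θ _ => ?_
    rw [← mul_assoc, ← Real.exp_add]
    congr 2
    ring
  have hJlow := J_lower a ha (d+1)
  have hJup := J_upper a ε hε0 d p hdeg happrox
  rw [hJrel] at hJup
  have hJle : (∫ θ in (0:ℝ)..π, Real.exp (a * Real.cos θ) * Real.cos ((d+1:ℕ)*θ))
      ≤ 2 * ε * Real.exp a := by
    calc (∫ θ in (0:ℝ)..π, Real.exp (a * Real.cos θ) * Real.cos ((d+1:ℕ)*θ))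
        = Real.exp a * (Real.exp (-a) * ∫ θ in (0:ℝ)..π, Real.exp (a * Real.cos θ) * Real.cos ((d+1:ℕ)*θ)) := by
          rw [← mul_assoc, ← Real.exp_add, add_neg_cancel, Real.exp_zero, one_mul]
      _ ≤ Real.exp a * (2 * ε) := by
          have := Real.exp_pos a
          exact mul_le_mul_of_nonneg_left hJup (Real.exp_pos a).le
      _ = 2 * ε * Real.exp a := by ring
  have hmain : π * (a/2)^(d+1) / ((d+1).factorial : ℝ) ≤ 2 * ε * Real.exp a := hJlow.trans hJle
  have part1 : (a / 2) ^ (d + 1) / (((d : ℕ) + 1).factorial : ℝ) ≤ 2 * ε * Real.exp a / π := by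
    rw [le_div_iff₀ Real.pi_pos]
    calc (a / 2) ^ (d + 1) / (((d+1).factorial) : ℝ) * π
        = π * (a/2)^(d+1) / ((d+1).factorial : ℝ) := by ring
      _ ≤ 2 * ε * Real.exp a := hmain
  refine ⟨part1, ?_⟩
  -- part 2
  set B : ℝ := 2 * ε * Real.exp a / π with hB
  have hBpos : 0 < B := by
    have := Real.exp_pos a
    have := Real.pi_pos
    positivity
  have hnr : (0:ℝ) < (d:ℝ) + 1 := by positivity
  have hfact : ((d+1).factorial : ℝ) ≤ Real.exp 1 * Real.sqrt ((d:ℝ)+1) * (((d:ℝ)+1)/Real.exp 1)^(d+1) := by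
    have h := factorial_stirling (d+1) (by omega)
    have hc : (((d+1:ℕ)):ℝ) = (d:ℝ) + 1 := by push_cast; ring
    rwa [hc] at h
  have h1 : (a/2)^(d+1) ≤ B * ((d+1).factorial : ℝ) := by
    have hfp : (0:ℝ) < ((d+1).factorial : ℝ) := by positivity
    exact (div_le_iff₀ hfp).1 part1
  have hq : (0:ℝ) ≤ (Real.exp 1/((d:ℝ)+1))^(d+1) := by positivity
  calc (Real.exp 1 * a / (2 * ((d : ℝ) + 1))) ^ (d + 1)
      = (a/2)^(d+1) * (Real.exp 1/((d:ℝ)+1))^(d+1) := by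
        rw [← mul_pow]
        congr 1
        field_simp
    _ ≤ (B * ((d+1).factorial : ℝ)) * (Real.exp 1/((d:ℝ)+1))^(d+1) :=
        mul_le_mul_of_nonneg_right h1 hq
    _ ≤ (B * (Real.exp 1 * Real.sqrt ((d:ℝ)+1) * (((d:ℝ)+1)/Real.exp 1)^(d+1))) * (Real.exp 1/((d:ℝ)+1))^(d+1) := by
        refine mul_le_mul_of_nonneg_right (mul_le_mul_of_nonneg_left hfact hBpos.le) hq
    _ = Real.exp 1 * Real.sqrt ((d:ℝ)+1) * B * ((((d:ℝ)+1)/Real.exp 1) * (Real.exp 1/((d:ℝ)+1)))^(d+1) := by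
        rw [mul_pow]; ring
    _ = Real.exp 1 * Real.sqrt ((d:ℝ)+1) * B := by
        rw [div_mul_div_comm]
        rw [show ((d:ℝ)+1) * Real.exp 1 / (Real.exp 1 * ((d:ℝ)+1)) = 1 by
          rw [div_eq_one_iff_eq (by positivity)]; ring]
        rw [one_pow, mul_one]
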